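/- Let n ≥ 2 and let P, Q, R, S be n×n complex matrices such that the 2n×2n matrix J̃ := fromBlocks P Q R S satisfies J̃·J̃ = −1, and such that for every n×n complex matrix B the matrix fromBlocks (−Q·Bᵀ) (P·B) (−S·Bᵀ) (R·B) is symmetric. Then Q = 0, R = 0, and either P = i•I and S = −i•I, or P = −i•I and S = i•I. -/

import Mathlib

open Matrix

noncomputable section

lemma aux_zero {n : ℕ} (hn : 2 ≤ n) (Q : Matrix (Fin n) (Fin n) ℂ)
    (h : ∀ B : Matrix (Fin n) (Fin n) ℂ, B * Qᵀ = Q * Bᵀ) : Q = 0 := by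
  have hQ : Qᵀ = Q := by simpa using h 1
  ext j l
  have : Nontrivial (Fin n) := Fin.nontrivial_iff_two_le.mpr hn
  obtain ⟨i, hi⟩ := exists_ne l
  have h2 := congrFun (congrFun (h (Matrix.single i j 1)) i) l
  rw [hQ] at h2
  have hts : (Matrix.single i j (1:ℂ))ᵀ = Matrix.single j i 1 := by
    ext a b; simp [Matrix.single, Matrix.transpose_apply, and_comm]
  rw [hts] at h2
  have hl : l ≠ i := hi.symm
  simpa [hl] using h2

/-- if `J̃ = fromBlocks P Q R S` squares to `−1` and
`fromBlocks (−Q·Bᵀ) (P·B) (−S·Bᵀ) (R·B)` is symmetric for every `B`, then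
`Q = 0`, `R = 0` and `(P,S) = (±i•I, ∓i•I)`. -/
theorem Jtilde_determined (n : ℕ) (hn : 2 ≤ n)
    (P Q R S : Matrix (Fin n) (Fin n) ℂ)
    (hsq : Matrix.fromBlocks P Q R S * Matrix.fromBlocks P Q R S =
      -(1 : Matrix (Fin n ⊕ Fin n) (Fin n ⊕ Fin n) ℂ))
    (hsym : ∀ B : Matrix (Fin n) (Fin n) ℂ,
      (Matrix.fromBlocks (-(Q * Bᵀ)) (P * B) (-(S * Bᵀ)) (R * B)).IsSymm) :
    Q = 0 ∧ R = 0 ∧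
      ((P = Complex.I • (1 : Matrix (Fin n) (Fin n) ℂ) ∧
        S = (-Complex.I) • (1 : Matrix (Fin n) (Fin n) ℂ)) ∨
       (P = (-Complex.I) • (1 : Matrix (Fin n) (Fin n) ℂ) ∧
        S = Complex.I • (1 : Matrix (Fin n) (Fin n) ℂ))) := by
  -- extract block equalities from symmetry
  have h11 : ∀ B : Matrix (Fin n) (Fin n) ℂ, B * Qᵀ = Q * Bᵀ := by
    intro B
    have h := (hsym B)
    rw [Matrix.IsSymm, Matrix.fromBlocks_transpose] at h
    have := congrArg Matrix.toBlocks₁₁ h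
    simp only [Matrix.toBlocks_fromBlocks₁₁, Matrix.transpose_neg, Matrix.transpose_mul,
      Matrix.transpose_transpose] at this
    exact neg_injective this
  have h22 : ∀ B : Matrix (Fin n) (Fin n) ℂ, B * Rᵀ = R * Bᵀ := by
    intro B
    have h := (hsym Bᵀ)
    rw [Matrix.IsSymm, Matrix.fromBlocks_transpose] at h
    have := congrArg Matrix.toBlocks₂₂ h
    simp only [Matrix.toBlocks_fromBlocks₂₂, Matrix.transpose_mul,
      Matrix.transpose_transpose] at this
    exact this
  have h12 : ∀ B : Matrix (Fin n) (Fin n) ℂ, -(B * Sᵀ) = P * B := by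
    intro B
    have h := (hsym B)
    rw [Matrix.IsSymm, Matrix.fromBlocks_transpose] at h
    have := congrArg Matrix.toBlocks₁₂ h
    simp only [Matrix.toBlocks_fromBlocks₁₂, Matrix.transpose_neg, Matrix.transpose_mul,
      Matrix.transpose_transpose] at this
    exact this
  have hQ0 : Q = 0 := aux_zero hn Q h11
  have hR0 : R = 0 := aux_zero hn R h22
  -- P is scalar
  have hS : S = -Pᵀ := by
    have := h12 1
    simp only [Matrix.one_mul, Matrix.mul_one] at this
    have : -Sᵀ = P := this
    calc S = -(-Sᵀ)ᵀ := by simp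
      _ = -Pᵀ := by rw [this]
  have hcomm : ∀ B : Matrix (Fin n) (Fin n) ℂ, Bᵀ * P = P * Bᵀ := by
    intro B
    have := h12 Bᵀ
    rw [hS] at this
    simpa using this
  obtain ⟨c, hc⟩ : P ∈ Set.range (Matrix.scalar (Fin n)) :=
    Matrix.mem_range_scalar_of_commute_single
      (fun i j _ => by
        have := hcomm (Matrix.single i j 1)ᵀ
        simpa [Commute, SemiconjBy] using this)
  have hP : P = c • (1 : Matrix (Fin n) (Fin n) ℂ) := by
    rw [← hc]; ext i j
    by_cases h : i = j <;> simp [Matrix.scalar_apply, Matrix.one_apply, h]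
  -- square condition
  have hPP : P * P = -1 := by
    rw [Matrix.fromBlocks_multiply] at hsq
    have hone : -(1 : Matrix (Fin n ⊕ Fin n) (Fin n ⊕ Fin n) ℂ) =
        Matrix.fromBlocks (-1) 0 0 (-1) := by
      rw [← Matrix.fromBlocks_one, Matrix.fromBlocks_neg]; simp
    rw [hone] at hsq
    have := congrArg Matrix.toBlocks₁₁ hsq
    simp only [Matrix.toBlocks_fromBlocks₁₁] at this
    rw [hQ0] at this
    simpa using this
  have : Inhabited (Fin n) := ⟨⟨0, by omega⟩⟩
  have hc2 : c * c = -1 := by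
    rw [hP] at hPP
    have := congrFun (congrFun hPP default) default
    simpa [Matrix.smul_apply, Matrix.one_apply] using this
  have hcases : c = Complex.I ∨ c = -Complex.I := by
    have : (c - Complex.I) * (c + Complex.I) = 0 := by
      linear_combination hc2 - Complex.I_sq
    rcases mul_eq_zero.mp this with h | h
    · left; exact sub_eq_zero.mp h
    · right; exact eq_neg_of_add_eq_zero_left h
  refine ⟨hQ0, hR0, ?_⟩
  have hSval : S = (-c) • (1 : Matrix (Fin n) (Fin n) ℂ) := by
    rw [hS, hP]; ext i j
    by_cases h : i = j <;> simp [Matrix.transpose_apply, Matrix.one_apply, h]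
  rcases hcases with rfl | rfl
  · exact Or.inl ⟨hP, hSval⟩
  · exact Or.inr ⟨by simpa using hP, by simpa using hSval⟩
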